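/- For n = 4 variables and a = 2: ∑_{k≥0} s_{(k,k)}(u_1,u_2,u_3,u_4) z^k = (1 - e_4 z^2) / ∏_{1≤i<j≤4} (1 - z u_i u_j), where s_{(k,k)} is the Schur polynomial of the rectangular partition (k,k) and e_4 = u_1 u_2 u_3 u_4. -/

import Mathlib

/-- The alternant `a_μ = det(u_i^{μ_j})` in `n` variables. -/
noncomputable def alternant (n : ℕ) (μ : Fin n → ℕ) : MvPolynomial (Fin n) ℚ :=
  Matrix.det (Matrix.of fun i j => MvPolynomial.X i ^ μ j)

namespace RectSchurAux

open MvPolynomial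

/-- The key algebraic identity, stated over an arbitrary commutative ring. -/
lemma key6 {R S : Type*} [CommRing R] [CommRing S] (c : R →+* S) (z : S)
    (g : R → S) (hg : ∀ t : R, g t * (1 - c t * z) = 1) (x0 x1 x2 x3 : R) :
    (c ((x0*x1)^2 * (x0-x1) * (x2-x3)) * g (x0*x1)
     - c ((x0*x2)^2 * (x0-x2) * (x1-x3)) * g (x0*x2)
     + c ((x0*x3)^2 * (x0-x3) * (x1-x2)) * g (x0*x3)
     + c ((x1*x2)^2 * (x1-x2) * (x0-x3)) * g (x1*x2)
     - c ((x1*x3)^2 * (x1-x3) * (x0-x2)) * g (x1*x3)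
     + c ((x2*x3)^2 * (x2-x3) * (x0-x1)) * g (x2*x3)) *
    ((1 - c (x0*x1) * z) * (1 - c (x0*x2) * z) * (1 - c (x0*x3) * z) *
      (1 - c (x1*x2) * z) * (1 - c (x1*x3) * z) * (1 - c (x2*x3) * z)) =
    (1 - c (x0*x1*x2*x3) * z ^ 2) *
      c ((x0-x1) * (x0-x2) * (x0-x3) * (x1-x2) * (x1-x3) * (x2-x3)) := by
  have e01 := hg (x0*x1)
  have e02 := hg (x0*x2)
  have e03 := hg (x0*x3)
  have e12 := hg (x1*x2)
  have e13 := hg (x1*x3)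
  have e23 := hg (x2*x3)
  calc _ = c ((x0*x1)^2 * (x0-x1) * (x2-x3)) * (g (x0*x1) * (1 - c (x0*x1) * z)) *
          ((1 - c (x0*x2) * z) * (1 - c (x0*x3) * z) * (1 - c (x1*x2) * z) *
            (1 - c (x1*x3) * z) * (1 - c (x2*x3) * z))
      - c ((x0*x2)^2 * (x0-x2) * (x1-x3)) * (g (x0*x2) * (1 - c (x0*x2) * z)) *
          ((1 - c (x0*x1) * z) * (1 - c (x0*x3) * z) * (1 - c (x1*x2) * z) *
            (1 - c (x1*x3) * z) * (1 - c (x2*x3) * z))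
      + c ((x0*x3)^2 * (x0-x3) * (x1-x2)) * (g (x0*x3) * (1 - c (x0*x3) * z)) *
          ((1 - c (x0*x1) * z) * (1 - c (x0*x2) * z) * (1 - c (x1*x2) * z) *
            (1 - c (x1*x3) * z) * (1 - c (x2*x3) * z))
      + c ((x1*x2)^2 * (x1-x2) * (x0-x3)) * (g (x1*x2) * (1 - c (x1*x2) * z)) *
          ((1 - c (x0*x1) * z) * (1 - c (x0*x2) * z) * (1 - c (x0*x3) * z) *
            (1 - c (x1*x3) * z) * (1 - c (x2*x3) * z))
      - c ((x1*x3)^2 * (x1-x3) * (x0-x2)) * (g (x1*x3) * (1 - c (x1*x3) * z)) *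
          ((1 - c (x0*x1) * z) * (1 - c (x0*x2) * z) * (1 - c (x0*x3) * z) *
            (1 - c (x1*x2) * z) * (1 - c (x2*x3) * z))
      + c ((x2*x3)^2 * (x2-x3) * (x0-x1)) * (g (x2*x3) * (1 - c (x2*x3) * z)) *
          ((1 - c (x0*x1) * z) * (1 - c (x0*x2) * z) * (1 - c (x0*x3) * z) *
            (1 - c (x1*x2) * z) * (1 - c (x1*x3) * z)) := by ring
    _ = _ := by
      rw [e01, e02, e03, e12, e13, e23]
      simp only [map_mul, map_sub, map_pow, map_one]
      ring

lemma prod_pairs {M : Type*} [CommMonoid M] (f : Finset (Fin 4) → M) :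
    ∏ I ∈ (Finset.univ : Finset (Fin 4)).powersetCard 2, f I =
      f {0,1} * f {0,2} * f {0,3} * f {1,2} * f {1,3} * f {2,3} := by
  have h : (Finset.univ : Finset (Fin 4)).powersetCard 2 =
      {({0,1} : Finset (Fin 4)), {0,2}, {0,3}, {1,2}, {1,3}, {2,3}} := by decide
  rw [h, Finset.prod_insert (by decide), Finset.prod_insert (by decide),
    Finset.prod_insert (by decide), Finset.prod_insert (by decide),
    Finset.prod_insert (by decide), Finset.prod_singleton]
  simp [mul_assoc]

/-- Geometric series with ratio `C t * X`. -/
noncomputable def G (t : MvPolynomial (Fin 4) ℚ) : PowerSeries (MvPolynomial (Fin 4) ℚ) :=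
  PowerSeries.mk fun k => t ^ k

lemma G_mul (t : MvPolynomial (Fin 4) ℚ) :
    G t * (1 - PowerSeries.C t * PowerSeries.X) = 1 := by
  have h : G t * (1 - PowerSeries.C t * PowerSeries.X)
      = G t - PowerSeries.C t * (G t * PowerSeries.X) := by ring
  rw [h]
  ext n
  cases n with
  | zero => simp [G]
  | succ n =>
      simp [G, PowerSeries.coeff_C_mul, PowerSeries.coeff_succ_mul_X, pow_succ, mul_comm]

/-- Laplace-type expansion of the alternant `a_{(k+3,k+2,1,0)}`. -/
lemma altA (k : ℕ) : alternant 4 ![k + 3, k + 2, 1, 0] =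
      (X 0 * X 1)^(k+2) * (X 0 - X 1) * (X 2 - X 3)
    - (X 0 * X 2)^(k+2) * (X 0 - X 2) * (X 1 - X 3)
    + (X 0 * X 3)^(k+2) * (X 0 - X 3) * (X 1 - X 2)
    + (X 1 * X 2)^(k+2) * (X 1 - X 2) * (X 0 - X 3)
    - (X 1 * X 3)^(k+2) * (X 1 - X 3) * (X 0 - X 2)
    + (X 2 * X 3)^(k+2) * (X 2 - X 3) * (X 0 - X 1) := by
  unfold alternant
  rw [Matrix.det_succ_row_zero, Fin.sum_univ_four]
  simp (config := { decide := true }) [Matrix.det_fin_three, Matrix.submatrix_apply,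
    Fin.succAbove, Fin.lt_def, Fin.sum_univ_succ,
    show Fin.succ 2 = (3 : Fin 4) from rfl, show Fin.castSucc 2 = (2 : Fin 4) from rfl,
    show Fin.castSucc 1 = (1 : Fin 4) from rfl, show Fin.castSucc 0 = (0 : Fin 4) from rfl]
  ring

/-- The Vandermonde alternant. -/
lemma altδ : alternant 4 ![3, 2, 1, 0] =
    (X 0 - X 1) * (X 0 - X 2) * (X 0 - X 3) * (X 1 - X 2) * (X 1 - X 3) * (X 2 - X 3) := by
  unfold alternant
  rw [Matrix.det_succ_row_zero, Fin.sum_univ_four]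
  simp (config := { decide := true }) [Matrix.det_fin_three, Matrix.submatrix_apply,
    Fin.succAbove, Fin.lt_def, Fin.sum_univ_succ,
    show Fin.succ 2 = (3 : Fin 4) from rfl, show Fin.castSucc 2 = (2 : Fin 4) from rfl,
    show Fin.castSucc 1 = (1 : Fin 4) from rfl, show Fin.castSucc 0 = (0 : Fin 4) from rfl]
  ring

lemma altδ_ne : alternant 4 ![3, 2, 1, 0] ≠ 0 := by
  rw [altδ]
  have h : ∀ i j : Fin 4, i ≠ j → (X i - X j : MvPolynomial (Fin 4) ℚ) ≠ 0 := by
    intro i j hij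
    rw [sub_ne_zero]
    exact fun h => hij (X_injective h)
  exact mul_ne_zero (mul_ne_zero (mul_ne_zero (mul_ne_zero (mul_ne_zero
    (h 0 1 (by decide)) (h 0 2 (by decide))) (h 0 3 (by decide)))
    (h 1 2 (by decide))) (h 1 3 (by decide))) (h 2 3 (by decide))

end RectSchurAux

open RectSchurAux in
/-- For `n = 4` variables and `a = 2`: if `s k` is the Schur polynomial of the
rectangular partition `(k,k)` (defined by the bialternant formula
`s_λ · a_δ = a_{λ+δ}` with `δ = (3,2,1,0)`), then
`∑_{k≥0} s_{(k,k)} z^k = (1 - e₄ z²) / ∏_{i<j} (1 - z uᵢuⱼ)`. -/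
theorem rect_schur_gf_four (s : ℕ → MvPolynomial (Fin 4) ℚ)
    (hs : ∀ k : ℕ, s k * alternant 4 ![3, 2, 1, 0] = alternant 4 ![k + 3, k + 2, 1, 0]) :
    (PowerSeries.mk fun k => s k) *
        ∏ I ∈ (Finset.univ : Finset (Fin 4)).powersetCard 2,
          (1 - PowerSeries.C (∏ i ∈ I, MvPolynomial.X i) *
            PowerSeries.X) =
      1 - PowerSeries.C
            (MvPolynomial.X 0 * MvPolynomial.X 1 * MvPolynomial.X 2 * MvPolynomial.X 3) *
          PowerSeries.X ^ 2 := by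
  classical
  rw [prod_pairs, Finset.prod_pair (show (0 : Fin 4) ≠ 1 by decide),
    Finset.prod_pair (show (0 : Fin 4) ≠ 2 by decide),
    Finset.prod_pair (show (0 : Fin 4) ≠ 3 by decide),
    Finset.prod_pair (show (1 : Fin 4) ≠ 2 by decide),
    Finset.prod_pair (show (1 : Fin 4) ≠ 3 by decide),
    Finset.prod_pair (show (2 : Fin 4) ≠ 3 by decide)]
  have haδ : PowerSeries.C (alternant 4 ![3, 2, 1, 0]) ≠ 0 := by
    intro h
    apply altδ_ne
    have h0 := congrArg (PowerSeries.coeff 0) h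
    simpa using h0
  apply mul_right_cancel₀ haδ
  have h1 : (PowerSeries.mk fun k => s k) *
        PowerSeries.C (alternant 4 ![3, 2, 1, 0])
      = PowerSeries.mk fun k => alternant 4 ![k + 3, k + 2, 1, 0] := by
    ext n
    simp [PowerSeries.coeff_mul_C, PowerSeries.coeff_mk, hs]
  have h2 : (PowerSeries.mk fun k => alternant 4 ![k + 3, k + 2, 1, 0]) =
        PowerSeries.C
          ((MvPolynomial.X 0 * MvPolynomial.X 1)^2 * (MvPolynomial.X 0 - MvPolynomial.X 1) *
            (MvPolynomial.X 2 - MvPolynomial.X 3)) * G (MvPolynomial.X 0 * MvPolynomial.X 1)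
      - PowerSeries.C
          ((MvPolynomial.X 0 * MvPolynomial.X 2)^2 * (MvPolynomial.X 0 - MvPolynomial.X 2) *
            (MvPolynomial.X 1 - MvPolynomial.X 3)) * G (MvPolynomial.X 0 * MvPolynomial.X 2)
      + PowerSeries.C
          ((MvPolynomial.X 0 * MvPolynomial.X 3)^2 * (MvPolynomial.X 0 - MvPolynomial.X 3) *
            (MvPolynomial.X 1 - MvPolynomial.X 2)) * G (MvPolynomial.X 0 * MvPolynomial.X 3)
      + PowerSeries.C
          ((MvPolynomial.X 1 * MvPolynomial.X 2)^2 * (MvPolynomial.X 1 - MvPolynomial.X 2) *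
            (MvPolynomial.X 0 - MvPolynomial.X 3)) * G (MvPolynomial.X 1 * MvPolynomial.X 2)
      - PowerSeries.C
          ((MvPolynomial.X 1 * MvPolynomial.X 3)^2 * (MvPolynomial.X 1 - MvPolynomial.X 3) *
            (MvPolynomial.X 0 - MvPolynomial.X 2)) * G (MvPolynomial.X 1 * MvPolynomial.X 3)
      + PowerSeries.C
          ((MvPolynomial.X 2 * MvPolynomial.X 3)^2 * (MvPolynomial.X 2 - MvPolynomial.X 3) *
            (MvPolynomial.X 0 - MvPolynomial.X 1)) * G (MvPolynomial.X 2 * MvPolynomial.X 3) := by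
    ext n
    simp only [PowerSeries.coeff_mk, map_sub, map_add, PowerSeries.coeff_C_mul, G]
    rw [altA n]
    ring
  rw [mul_right_comm, h1, h2, altδ]
  exact key6 (PowerSeries.C (R := MvPolynomial (Fin 4) ℚ)) PowerSeries.X G G_mul
    (MvPolynomial.X 0) (MvPolynomial.X 1) (MvPolynomial.X 2) (MvPolynomial.X 3)
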